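/- Let ε : F(n,1) → {−1,1} be a function on the edges of the n-dimensional hypercube such that p(s,ε) = −1 for every square s. Then the quantity ε(θ)·sign(φ(θ)) is the same for every monotone path of edges θ of length n from (0,…,0) to (1,…,1), where φ(θ) ∈ S_n is the permutation recording the order in which θ traverses the coordinate directions, and sign denotes the sign of the permutation. -/

import Mathlib

abbrev Vertex (n : ℕ) := Fin n → Bool
abbrev Face (n : ℕ) := Fin n → Option Bool

abbrev IsEdge {n : ℕ} (a : Face n) : Prop :=
  (Finset.univ.filter fun i => a i = none).card = 1

abbrev IsSq {n : ℕ} (s : Face n) : Prop :=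
  (Finset.univ.filter fun i => s i = none).card = 2

/-- Endpoint of a face: replace every `*` (i.e. `none`) by the bit `b`. -/
abbrev ep {n : ℕ} (b : Bool) (a : Face n) : Vertex n := fun i => (a i).getD b

/-- A path of edges of length `k` from `u` to `w`. -/
def IsPathFromTo (n k : ℕ) (θ : Fin k → Face n) (u w : Vertex n) : Prop :=
  (∀ i, IsEdge (θ i)) ∧
  (∀ (i : Fin k) (h : i.val + 1 < k), ep true (θ i) = ep false (θ ⟨i.val + 1, h⟩)) ∧
  (∀ h : 0 < k, ep false (θ ⟨0, h⟩) = u) ∧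
  (∀ h : 0 < k, ep true (θ ⟨k - 1, Nat.sub_lt h one_pos⟩) = w) ∧
  (k = 0 → u = w)

/-- Product of `ε` over the four boundary edges of the square `s`. -/
def pSq (n : ℕ) (s : Face n) (ε : Face n → ℤ) : ℤ :=
  ∏ a ∈ Finset.univ.filter (fun a : Face n => IsEdge a ∧ ∀ j, s j ≠ none → a j = s j), ε a

/-! ### Auxiliary definitions -/

/-- The canonical `i`-th edge of the monotone path determined by the permutation `σ`. -/
def Edg (n : ℕ) (σ : Equiv.Perm (Fin n)) (i : Fin n) : Face n :=
  fun j => if j = σ i then none else some (decide ((σ.symm j : ℕ) < (i : ℕ)))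

/-- The product of `ε` over the canonical path determined by `σ`. -/
def fprod (n : ℕ) (ε : Face n → ℤ) (σ : Equiv.Perm (Fin n)) : ℤ :=
  ∏ i, ε (Edg n σ i)

lemma isEdge_Edg (n : ℕ) (σ : Equiv.Perm (Fin n)) (i : Fin n) : IsEdge (Edg n σ i) := by
  show (Finset.univ.filter fun j => Edg n σ i j = none).card = 1
  have hfil : (Finset.univ.filter fun j => Edg n σ i j = none) = {σ i} := by
    ext j
    simp only [Finset.mem_filter, Finset.mem_univ, true_and, Finset.mem_singleton, Edg]
    by_cases hc : j = σ i <;> simp [hc]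
  rw [hfil, Finset.card_singleton]

/-- A monotone path of length `n` from `0` to `1` with `*`-positions `σ` is the
canonical path of `σ`. -/
lemma path_eq_Edg (n : ℕ) (θ : Fin n → Face n)
    (hθ : IsPathFromTo n n θ (fun _ => false) (fun _ => true))
    (σ : Equiv.Perm (Fin n)) (hσ : ∀ i, θ i (σ i) = none) :
    ∀ i, θ i = Edg n σ i := by
  have hone : ∀ i j, θ i j = none → j = σ i := by
    intro i j hj
    obtain ⟨e, he⟩ := Finset.card_eq_one.mp (hθ.1 i)
    have hji : j ∈ Finset.univ.filter fun k => θ i k = none := by simp [hj]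
    have hsi : σ i ∈ Finset.univ.filter fun k => θ i k = none := by simp [hσ i]
    rw [he, Finset.mem_singleton] at hji hsi
    rw [hji, hsi]
  have main : ∀ (m : ℕ) (hm : m < n) (j : Fin n),
      ep false (θ ⟨m, hm⟩) j = decide ((σ.symm j : ℕ) < m) := by
    intro m
    induction m with
    | zero =>
      intro hm j
      rw [hθ.2.2.1 hm]
      simp
    | succ m ih =>
      intro hm j
      have hm' : m < n := by omega
      have hcons : ep true (θ ⟨m, hm'⟩) = ep false (θ ⟨m + 1, hm⟩) := hθ.2.1 ⟨m, hm'⟩ hm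
      rw [← hcons]
      by_cases hj : j = σ ⟨m, hm'⟩
      · subst hj
        show (θ ⟨m, hm'⟩ (σ ⟨m, hm'⟩)).getD true = _
        rw [hσ ⟨m, hm'⟩]
        simp
      · obtain ⟨bb, hbb⟩ : ∃ bb, θ ⟨m, hm'⟩ j = some bb := by
          cases hx : θ ⟨m, hm'⟩ j with
          | none => exact absurd (hone _ _ hx) hj
          | some bb => exact ⟨bb, rfl⟩
        have hIH := ih hm' j
        have hne : (σ.symm j : ℕ) ≠ m := by
          intro hc
          apply hj
          have hs : σ.symm j = ⟨m, hm'⟩ := Fin.ext hc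
          rw [← hs, Equiv.apply_symm_apply]
        show (θ ⟨m, hm'⟩ j).getD true = _
        have hIH' : (θ ⟨m, hm'⟩ j).getD false = decide ((σ.symm j : ℕ) < m) := hIH
        rw [hbb] at hIH' ⊢
        simp only [Option.getD_some] at hIH' ⊢
        rw [hIH']
        simp only [decide_eq_decide]
        omega
  intro i
  funext j
  by_cases hj : j = σ i
  · rw [hj, hσ i, Edg, if_pos rfl]
  · obtain ⟨bb, hbb⟩ : ∃ bb, θ i j = some bb := by
      cases hx : θ i j with
      | none => exact absurd (hone _ _ hx) hj
      | some bb => exact ⟨bb, rfl⟩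
    have hm : ep false (θ i) j = decide ((σ.symm j : ℕ) < (i : ℕ)) := main i.val i.isLt j
    have hm' : (θ i j).getD false = decide ((σ.symm j : ℕ) < (i : ℕ)) := hm
    rw [hbb, Option.getD_some] at hm'
    rw [Edg, if_neg hj, hbb, hm']

/-- The square across which the steps `a` and `a+1 = b` of the path `σ` are swapped. -/
def SqF (n : ℕ) (σ : Equiv.Perm (Fin n)) (a b : Fin n) : Face n :=
  fun j => if j = σ a ∨ j = σ b then none else some (decide ((σ.symm j : ℕ) < (a : ℕ)))

lemma fprod_swap (n : ℕ) (ε : Face n → ℤ)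
    (hε : ∀ a : Face n, IsEdge a → ε a = 1 ∨ ε a = -1)
    (h : ∀ s : Face n, IsSq s → pSq n s ε = -1)
    (σ : Equiv.Perm (Fin n)) (a b : Fin n) (hab : (a : ℕ) + 1 = (b : ℕ)) :
    fprod n ε (σ * Equiv.swap a b) = - fprod n ε σ := by
  set σ' := σ * Equiv.swap a b with hσ'def
  have hne : a ≠ b := by
    intro hc; rw [hc] at hab; omega
  have hc12 : σ a ≠ σ b := fun hc => hne (σ.injective hc)
  have hσ'a : σ' a = σ b := by
    rw [hσ'def, Equiv.Perm.mul_apply, Equiv.swap_apply_left]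
  have hσ'b : σ' b = σ a := by
    rw [hσ'def, Equiv.Perm.mul_apply, Equiv.swap_apply_right]
  have hσ'i : ∀ i : Fin n, i ≠ a → i ≠ b → σ' i = σ i := by
    intro i h1 h2
    rw [hσ'def, Equiv.Perm.mul_apply, Equiv.swap_apply_of_ne_of_ne h1 h2]
  have hσ's : ∀ j, σ'.symm j = Equiv.swap a b (σ.symm j) := by
    intro j
    rw [Equiv.symm_apply_eq, hσ'def, Equiv.Perm.mul_apply, Equiv.swap_apply_self,
      Equiv.apply_symm_apply]
  -- values of the four canonical edges
  have hA1 : Edg n σ a (σ a) = none := by rw [Edg, if_pos rfl]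
  have hA2 : Edg n σ a (σ b) = some false := by
    rw [Edg, if_neg (Ne.symm hc12), Equiv.symm_apply_apply]
    simp only [Option.some.injEq, decide_eq_false_iff_not]
    omega
  have hB1 : Edg n σ b (σ a) = some true := by
    rw [Edg, if_neg hc12, Equiv.symm_apply_apply]
    simp only [Option.some.injEq, decide_eq_true_eq]
    omega
  have hB2 : Edg n σ b (σ b) = none := by rw [Edg, if_pos rfl]
  have hC2 : Edg n σ' a (σ b) = none := by rw [Edg, if_pos hσ'a.symm]
  have hC1 : Edg n σ' a (σ a) = some false := by
    rw [Edg, if_neg (by rw [hσ'a]; exact hc12), hσ's, Equiv.symm_apply_apply,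
      Equiv.swap_apply_left]
    simp only [Option.some.injEq, decide_eq_false_iff_not]
    omega
  have hD1 : Edg n σ' b (σ a) = none := by rw [Edg, if_pos hσ'b.symm]
  have hD2 : Edg n σ' b (σ b) = some true := by
    rw [Edg, if_neg (by rw [hσ'b]; exact Ne.symm hc12), hσ's, Equiv.symm_apply_apply,
      Equiv.swap_apply_right]
    simp only [Option.some.injEq, decide_eq_true_eq]
    omega
  -- off-coordinate values agree with the square
  have hsymm_ne : ∀ j : Fin n, j ≠ σ a → j ≠ σ b → σ.symm j ≠ a ∧ σ.symm j ≠ b := by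
    intro j h1 h2
    constructor
    · intro hc; apply h1; rw [← hc, Equiv.apply_symm_apply]
    · intro hc; apply h2; rw [← hc, Equiv.apply_symm_apply]
  have hAoff : ∀ j : Fin n, j ≠ σ a → j ≠ σ b → Edg n σ a j = SqF n σ a b j := by
    intro j h1 h2
    rw [Edg, SqF, if_neg h1, if_neg (by tauto)]
  have hBoff : ∀ j : Fin n, j ≠ σ a → j ≠ σ b → Edg n σ b j = SqF n σ a b j := by
    intro j h1 h2
    obtain ⟨hs1, hs2⟩ := hsymm_ne j h1 h2
    have hs1' : (σ.symm j : ℕ) ≠ (a : ℕ) := fun hc => hs1 (Fin.ext hc)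
    rw [Edg, SqF, if_neg h2, if_neg (by tauto)]
    simp only [Option.some.injEq, decide_eq_decide]
    omega
  have hCoff : ∀ j : Fin n, j ≠ σ a → j ≠ σ b → Edg n σ' a j = SqF n σ a b j := by
    intro j h1 h2
    obtain ⟨hs1, hs2⟩ := hsymm_ne j h1 h2
    rw [Edg, SqF, if_neg (by rw [hσ'a]; exact h2), if_neg (by tauto), hσ's,
      Equiv.swap_apply_of_ne_of_ne hs1 hs2]
  have hDoff : ∀ j : Fin n, j ≠ σ a → j ≠ σ b → Edg n σ' b j = SqF n σ a b j := by
    intro j h1 h2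
    obtain ⟨hs1, hs2⟩ := hsymm_ne j h1 h2
    have hs1' : (σ.symm j : ℕ) ≠ (a : ℕ) := fun hc => hs1 (Fin.ext hc)
    rw [Edg, SqF, if_neg (by rw [hσ'b]; exact h1), if_neg (by tauto), hσ's,
      Equiv.swap_apply_of_ne_of_ne hs1 hs2]
    simp only [Option.some.injEq, decide_eq_decide]
    omega
  -- the square is a square
  have hIsSq : IsSq (SqF n σ a b) := by
    show (Finset.univ.filter fun j => SqF n σ a b j = none).card = 2
    have hfil : (Finset.univ.filter fun j => SqF n σ a b j = none) = {σ a, σ b} := by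
      ext j
      simp only [Finset.mem_filter, Finset.mem_univ, true_and, Finset.mem_insert,
        Finset.mem_singleton, SqF]
      by_cases hc : j = σ a ∨ j = σ b <;> simp [hc] <;> tauto
    rw [hfil, Finset.card_pair hc12]
  -- distinctness of the four edges
  have hAB : Edg n σ a ≠ Edg n σ b := by
    intro hc; have := congrFun hc (σ a); rw [hA1, hB1] at this; simp at this
  have hAC : Edg n σ a ≠ Edg n σ' a := by
    intro hc; have := congrFun hc (σ a); rw [hA1, hC1] at this; simp at this
  have hAD : Edg n σ a ≠ Edg n σ' b := by
    intro hc; have := congrFun hc (σ b); rw [hA2, hD2] at this; simp at this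
  have hBC : Edg n σ b ≠ Edg n σ' a := by
    intro hc; have := congrFun hc (σ a); rw [hB1, hC1] at this; simp at this
  have hBD : Edg n σ b ≠ Edg n σ' b := by
    intro hc; have := congrFun hc (σ b); rw [hB2, hD2] at this; simp at this
  have hCD : Edg n σ' a ≠ Edg n σ' b := by
    intro hc; have := congrFun hc (σ b); rw [hC2, hD2] at this; simp at this
  -- identification of the boundary edges of the square
  have hfilter :
      (Finset.univ.filter
        (fun x : Face n => IsEdge x ∧ ∀ j, SqF n σ a b j ≠ none → x j = SqF n σ a b j))
      = {Edg n σ a, Edg n σ b, Edg n σ' a, Edg n σ' b} := by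
    ext x
    simp only [Finset.mem_filter, Finset.mem_univ, true_and, Finset.mem_insert,
      Finset.mem_singleton]
    constructor
    · rintro ⟨hxE, hxM⟩
      obtain ⟨e, he⟩ := Finset.card_eq_one.mp hxE
      have hxe : x e = none := by
        have hmem : e ∈ ({e} : Finset (Fin n)) := Finset.mem_singleton_self e
        rw [← he] at hmem
        simpa using hmem
      have huniq : ∀ j, x j = none → j = e := by
        intro j hj
        have hmem : j ∈ Finset.univ.filter fun k => x k = none := by simp [hj]
        rw [he] at hmem
        simpa using hmem
      have hoff : ∀ j : Fin n, j ≠ σ a → j ≠ σ b → x j = SqF n σ a b j := by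
        intro j h1 h2
        apply hxM
        rw [SqF, if_neg (by tauto)]
        simp
      have he12 : e = σ a ∨ e = σ b := by
        by_contra hcon
        push_neg at hcon
        rw [hoff e hcon.1 hcon.2, SqF, if_neg (by tauto)] at hxe
        simp at hxe
      rcases he12 with he1 | he2
      · -- none at σ a : edge is A or D
        subst he1
        have hb : x (σ b) ≠ none := fun hc => hc12 (Eq.symm (huniq _ hc))
        obtain ⟨bb, hbb⟩ : ∃ bb, x (σ b) = some bb := by
          cases hx : x (σ b) with
          | none => exact absurd hx hb
          | some bb => exact ⟨bb, rfl⟩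
        cases bb with
        | false =>
          left
          funext j
          by_cases h1 : j = σ a
          · rw [h1, hxe, hA1]
          by_cases h2 : j = σ b
          · rw [h2, hbb, hA2]
          · rw [hoff j h1 h2, hAoff j h1 h2]
        | true =>
          right; right; right
          funext j
          by_cases h1 : j = σ a
          · rw [h1, hxe, hD1]
          by_cases h2 : j = σ b
          · rw [h2, hbb, hD2]
          · rw [hoff j h1 h2, hDoff j h1 h2]
      · -- none at σ b : edge is B or C
        subst he2
        have hb : x (σ a) ≠ none := fun hc => hc12 (huniq _ hc)
        obtain ⟨bb, hbb⟩ : ∃ bb, x (σ a) = some bb := by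
          cases hx : x (σ a) with
          | none => exact absurd hx hb
          | some bb => exact ⟨bb, rfl⟩
        cases bb with
        | true =>
          right; left
          funext j
          by_cases h1 : j = σ a
          · rw [h1, hbb, hB1]
          by_cases h2 : j = σ b
          · rw [h2, hxe, hB2]
          · rw [hoff j h1 h2, hBoff j h1 h2]
        | false =>
          right; right; left
          funext j
          by_cases h1 : j = σ a
          · rw [h1, hbb, hC1]
          by_cases h2 : j = σ b
          · rw [h2, hxe, hC2]
          · rw [hoff j h1 h2, hCoff j h1 h2]
    · have hmem : ∀ j : Fin n, SqF n σ a b j ≠ none → j ≠ σ a ∧ j ≠ σ b := by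
        intro j hj
        by_contra hcon
        apply hj
        rw [SqF, if_pos (by tauto)]
      rintro (rfl | rfl | rfl | rfl)
      · exact ⟨isEdge_Edg n σ a, fun j hj => hAoff j (hmem j hj).1 (hmem j hj).2⟩
      · exact ⟨isEdge_Edg n σ b, fun j hj => hBoff j (hmem j hj).1 (hmem j hj).2⟩
      · exact ⟨isEdge_Edg n σ' a, fun j hj => hCoff j (hmem j hj).1 (hmem j hj).2⟩
      · exact ⟨isEdge_Edg n σ' b, fun j hj => hDoff j (hmem j hj).1 (hmem j hj).2⟩
  -- the square relation
  have hsq : ε (Edg n σ a) * ε (Edg n σ b) * ε (Edg n σ' a) * ε (Edg n σ' b) = -1 := by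
    have hh := h (SqF n σ a b) hIsSq
    rw [pSq, hfilter] at hh
    rw [Finset.prod_insert (by simp [hAB, hAC, hAD]),
      Finset.prod_insert (by simp [hBC, hBD]), Finset.prod_pair hCD] at hh
    linear_combination hh
  have h1 : ε (Edg n σ a) * ε (Edg n σ a) = 1 := by
    rcases hε _ (isEdge_Edg n σ a) with hh | hh <;> rw [hh] <;> norm_num
  have h2 : ε (Edg n σ b) * ε (Edg n σ b) = 1 := by
    rcases hε _ (isEdge_Edg n σ b) with hh | hh <;> rw [hh] <;> norm_num
  have hCD2 : ε (Edg n σ' a) * ε (Edg n σ' b) = -(ε (Edg n σ a) * ε (Edg n σ b)) := by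
    calc ε (Edg n σ' a) * ε (Edg n σ' b)
        = (ε (Edg n σ a) * ε (Edg n σ a)) *
            ((ε (Edg n σ b) * ε (Edg n σ b)) * (ε (Edg n σ' a) * ε (Edg n σ' b))) := by
          rw [h1, h2]; ring
      _ = (ε (Edg n σ a) * ε (Edg n σ b)) *
            (ε (Edg n σ a) * ε (Edg n σ b) * ε (Edg n σ' a) * ε (Edg n σ' b)) := by ring
      _ = -(ε (Edg n σ a) * ε (Edg n σ b)) := by rw [hsq]; ring
  -- decompose the products
  have hsplit : ∀ ρ : Equiv.Perm (Fin n),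
      fprod n ε ρ = ε (Edg n ρ a) * ε (Edg n ρ b) *
        ∏ i ∈ ({a, b} : Finset (Fin n))ᶜ, ε (Edg n ρ i) := by
    intro ρ
    rw [fprod, ← Finset.prod_mul_prod_compl ({a, b} : Finset (Fin n))
      (fun i => ε (Edg n ρ i)), Finset.prod_pair hne]
  have hRR : ∏ i ∈ ({a, b} : Finset (Fin n))ᶜ, ε (Edg n σ' i)
      = ∏ i ∈ ({a, b} : Finset (Fin n))ᶜ, ε (Edg n σ i) := by
    apply Finset.prod_congr rfl
    intro i hi
    simp only [Finset.mem_compl, Finset.mem_insert, Finset.mem_singleton] at hi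
    push_neg at hi
    have hia : (i : ℕ) ≠ (a : ℕ) := fun hc => hi.1 (Fin.ext hc)
    have hib : (i : ℕ) ≠ (b : ℕ) := fun hc => hi.2 (Fin.ext hc)
    congr 1
    funext j
    rw [Edg, Edg, hσ'i i hi.1 hi.2]
    by_cases hj : j = σ i
    · rw [if_pos hj, if_pos hj]
    · rw [if_neg hj, if_neg hj, hσ's j]
      rcases eq_or_ne (σ.symm j) a with hsj | hsj
      · rw [hsj, Equiv.swap_apply_left]
        simp only [Option.some.injEq, decide_eq_decide]
        omega
      rcases eq_or_ne (σ.symm j) b with hsj2 | hsj2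
      · rw [hsj2, Equiv.swap_apply_right]
        simp only [Option.some.injEq, decide_eq_decide]
        omega
      · rw [Equiv.swap_apply_of_ne_of_ne hsj hsj2]
  rw [hsplit σ', hsplit σ, hRR, hCD2]
  ring

lemma g_swap (n : ℕ) (ε : Face n → ℤ)
    (hε : ∀ a : Face n, IsEdge a → ε a = 1 ∨ ε a = -1)
    (h : ∀ s : Face n, IsSq s → pSq n s ε = -1)
    (σ : Equiv.Perm (Fin n)) (a b : Fin n) (hab : (a : ℕ) + 1 = (b : ℕ)) :
    fprod n ε (σ * Equiv.swap a b) * ((Equiv.Perm.sign (σ * Equiv.swap a b) : ℤˣ) : ℤ)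
      = fprod n ε σ * ((Equiv.Perm.sign σ : ℤˣ) : ℤ) := by
  have hne : a ≠ b := by intro hc; rw [hc] at hab; omega
  rw [fprod_swap n ε hε h σ a b hab, Equiv.Perm.sign_mul, Equiv.Perm.sign_swap hne]
  simp only [Units.val_mul, Units.val_neg, Units.val_one]
  ring

lemma g_const (n : ℕ) (ε : Face n → ℤ)
    (hε : ∀ a : Face n, IsEdge a → ε a = 1 ∨ ε a = -1)
    (h : ∀ s : Face n, IsSq s → pSq n s ε = -1)
    (σ τ : Equiv.Perm (Fin n)) :
    fprod n ε σ * ((Equiv.Perm.sign σ : ℤˣ) : ℤ)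
      = fprod n ε τ * ((Equiv.Perm.sign τ : ℤˣ) : ℤ) := by
  cases n with
  | zero => rw [Subsingleton.elim σ τ]
  | succ m =>
    have key : ∀ π : Equiv.Perm (Fin (m + 1)), ∀ ρ : Equiv.Perm (Fin (m + 1)),
        fprod (m + 1) ε (ρ * π) * ((Equiv.Perm.sign (ρ * π) : ℤˣ) : ℤ)
          = fprod (m + 1) ε ρ * ((Equiv.Perm.sign ρ : ℤˣ) : ℤ) := by
      intro π
      have hπ : π ∈ Submonoid.closure
          (Set.range fun i : Fin m => Equiv.swap i.castSucc i.succ) := by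
        rw [Equiv.Perm.mclosure_swap_castSucc_succ]
        exact Submonoid.mem_top π
      induction hπ using Submonoid.closure_induction with
      | mem x hx =>
        obtain ⟨i, rfl⟩ := hx
        intro ρ
        exact g_swap (m + 1) ε hε h ρ i.castSucc i.succ (by simp)
      | one => intro ρ; rw [mul_one]
      | mul x y hx hy ihx ihy =>
        intro ρ
        rw [← mul_assoc, ihy, ihx]
    have hkey := key (σ⁻¹ * τ) σ
    rw [mul_inv_cancel_left] at hkey
    exact hkey.symm

/-- If `ε` is a `{−1,1}`-valued function on the edges with `p(s,ε) = −1` for every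
square, then `ε(θ) · sign(φ(θ))` is the same for every monotone path of edges `θ`
of length `n` from `(0,…,0)` to `(1,…,1)`, where `φ(θ)(i)` is the position of the
`*` coordinate of `θᵢ`. -/
theorem eps_sign_path_independent (n : ℕ) (ε : Face n → ℤ)
    (hε : ∀ a : Face n, IsEdge a → ε a = 1 ∨ ε a = -1)
    (h : ∀ s : Face n, IsSq s → pSq n s ε = -1)
    (θ ζ : Fin n → Face n)
    (hθ : IsPathFromTo n n θ (fun _ => false) (fun _ => true))
    (hζ : IsPathFromTo n n ζ (fun _ => false) (fun _ => true))
    (σ τ : Equiv.Perm (Fin n))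
    (hσ : ∀ i, θ i (σ i) = none) (hτ : ∀ i, ζ i (τ i) = none) :
    (∏ i, ε (θ i)) * ((Equiv.Perm.sign σ : ℤˣ) : ℤ)
      = (∏ i, ε (ζ i)) * ((Equiv.Perm.sign τ : ℤˣ) : ℤ) := by
  have e1 := path_eq_Edg n θ hθ σ hσ
  have e2 := path_eq_Edg n ζ hζ τ hτ
  have p1 : ∏ i, ε (θ i) = fprod n ε σ :=
    Finset.prod_congr rfl fun i _ => by rw [e1 i]
  have p2 : ∏ i, ε (ζ i) = fprod n ε τ :=
    Finset.prod_congr rfl fun i _ => by rw [e2 i]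
  rw [p1, p2]
  exact g_const n ε hε h σ τ
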